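/- Let L : E → F be a Fredholm operator of index 0 between Banach spaces and let A, B be correctors of L. Set P = L + A and Q = L + B. Then Q P⁻¹ is an automorphism of F mapping any finite-dimensional subspace F₀ ⊆ F containing im(A − B) into itself, and the sign of the determinant of the induced map F₀ → F₀ is independent of the choice of such F₀. -/

import Mathlib

private lemma aux_det_one_add_comm {V W : Type*} [AddCommGroup V] [Module ℝ V]
    [AddCommGroup W] [Module ℝ W] [FiniteDimensional ℝ V] [FiniteDimensional ℝ W]
    (f : V →ₗ[ℝ] W) (g : W →ₗ[ℝ] V) :
    LinearMap.det (1 + g ∘ₗ f) = LinearMap.det (1 + f ∘ₗ g) := by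
  classical
  let bV := Module.finBasis ℝ V
  let bW := Module.finBasis ℝ W
  rw [← LinearMap.det_toMatrix bV (1 + g ∘ₗ f), ← LinearMap.det_toMatrix bW (1 + f ∘ₗ g),
    map_add, map_add, LinearMap.toMatrix_one, LinearMap.toMatrix_one,
    LinearMap.toMatrix_comp bV bW bV, LinearMap.toMatrix_comp bW bV bW,
    Matrix.det_one_add_mul_comm]

private lemma aux_det_restrict {V : Type*} [AddCommGroup V] [Module ℝ V]
    (T N : V →ₗ[ℝ] V) (hT : ∀ x, T x = x + N x)
    (S₀ S₂ : Submodule ℝ V) (h01 : S₀ ≤ S₂) [FiniteDimensional ℝ S₂]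
    (hN : ∀ x, N x ∈ S₀)
    (h₀ : ∀ x ∈ S₀, T x ∈ S₀) (h₂ : ∀ x ∈ S₂, T x ∈ S₂) :
    LinearMap.det (T.restrict h₀) = LinearMap.det (T.restrict h₂) := by
  haveI : FiniteDimensional ℝ S₀ := Submodule.finiteDimensional_of_le h01
  let M : S₂ →ₗ[ℝ] S₀ := (N ∘ₗ S₂.subtype).codRestrict S₀ (fun x => hN x)
  let ι : S₀ →ₗ[ℝ] S₂ := Submodule.inclusion h01
  have e0 : T.restrict h₀ = 1 + M ∘ₗ ι := by
    ext x
    simp [M, ι, LinearMap.restrict_apply, hT]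
    rfl
  have e2 : T.restrict h₂ = 1 + ι ∘ₗ M := by
    ext x
    simp [M, ι, LinearMap.restrict_apply, hT]
    rfl
  rw [e0, e2, aux_det_one_add_comm]

/-- For correctors `A`, `B` of a Fredholm operator `L` of index 0, with `P = L + A` and
`Q = L + B` invertible, `QP⁻¹` is an automorphism of `F` mapping any finite-dimensional
subspace `F₀ ⊇ im(A - B)` into itself, and the sign of the determinant of the induced
endomorphism of `F₀` is independent of the choice of `F₀`. -/
theorem stmt10 {E F : Type*}
    [NormedAddCommGroup E] [NormedSpace ℝ E] [CompleteSpace E]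
    [NormedAddCommGroup F] [NormedSpace ℝ F] [CompleteSpace F]
    (L A B : E →L[ℝ] F)
    (hA : FiniteDimensional ℝ (LinearMap.range (A : E →ₗ[ℝ] F)))
    (hB : FiniteDimensional ℝ (LinearMap.range (B : E →ₗ[ℝ] F)))
    (eP eQ : E ≃L[ℝ] F)
    (heP : (eP : E →L[ℝ] F) = L + A) (heQ : (eQ : E →L[ℝ] F) = L + B) :
    Function.Bijective
      ((((L + B).comp (eP.symm : F →L[ℝ] E)) : F →L[ℝ] F) : F →ₗ[ℝ] F) ∧
    (∀ F₀ : Submodule ℝ F, FiniteDimensional ℝ F₀ →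
      LinearMap.range ((A - B : E →L[ℝ] F) : E →ₗ[ℝ] F) ≤ F₀ →
      ∀ x ∈ F₀, ((((L + B).comp (eP.symm : F →L[ℝ] E)) : F →L[ℝ] F) : F →ₗ[ℝ] F) x ∈ F₀) ∧
    ∀ (F₀ F₁ : Submodule ℝ F), FiniteDimensional ℝ F₀ → FiniteDimensional ℝ F₁ →
      LinearMap.range ((A - B : E →L[ℝ] F) : E →ₗ[ℝ] F) ≤ F₀ →
      LinearMap.range ((A - B : E →L[ℝ] F) : E →ₗ[ℝ] F) ≤ F₁ →
      ∀ (h₀ : ∀ x ∈ F₀,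
          ((((L + B).comp (eP.symm : F →L[ℝ] E)) : F →L[ℝ] F) : F →ₗ[ℝ] F) x ∈ F₀)
        (h₁ : ∀ x ∈ F₁,
          ((((L + B).comp (eP.symm : F →L[ℝ] E)) : F →L[ℝ] F) : F →ₗ[ℝ] F) x ∈ F₁),
      (0 < LinearMap.det
          (LinearMap.restrict
            ((((L + B).comp (eP.symm : F →L[ℝ] E)) : F →L[ℝ] F) : F →ₗ[ℝ] F) h₀) ↔
       0 < LinearMap.det
          (LinearMap.restrict
            ((((L + B).comp (eP.symm : F →L[ℝ] E)) : F →L[ℝ] F) : F →ₗ[ℝ] F) h₁)) := by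
  set T : F →ₗ[ℝ] F :=
    ((((L + B).comp (eP.symm : F →L[ℝ] E)) : F →L[ℝ] F) : F →ₗ[ℝ] F) with hTdef
  set N : F →ₗ[ℝ] F :=
    ((((B - A).comp (eP.symm : F →L[ℝ] E)) : F →L[ℝ] F) : F →ₗ[ℝ] F) with hNdef
  have hT : ∀ x, T x = x + N x := by
    intro x
    have h1 : (L + A) (eP.symm x) = x := by
      rw [← heP]; exact eP.apply_symm_apply x
    have : T x = (L + A) (eP.symm x) + (B - A) (eP.symm x) := by
      simp [hTdef, hNdef]
    rw [this, h1]
    rfl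
  have hNrange : ∀ x, N x ∈ LinearMap.range ((A - B : E →L[ℝ] F) : E →ₗ[ℝ] F) := by
    intro x
    have : N x = -(((A - B : E →L[ℝ] F) : E →ₗ[ℝ] F) (eP.symm x)) := by
      simp [hNdef]
    rw [this]
    exact neg_mem (LinearMap.mem_range_self _ _)
  refine ⟨?_, ?_, ?_⟩
  · have hfun : ⇑T = ⇑eQ ∘ ⇑eP.symm := by
      funext x
      simp [hTdef, ← heQ]
    rw [hfun]
    exact eQ.bijective.comp eP.symm.bijective
  · intro F₀ _ hle x hx
    rw [hT x]
    exact add_mem hx (hle (hNrange x))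
  · intro F₀ F₁ hFD₀ hFD₁ hle₀ hle₁ h₀ h₁
    haveI := hFD₀; haveI := hFD₁
    haveI : FiniteDimensional ℝ (F₀ ⊔ F₁ : Submodule ℝ F) := by
      exact Submodule.finiteDimensional_sup F₀ F₁
    have h₂ : ∀ x ∈ (F₀ ⊔ F₁ : Submodule ℝ F), T x ∈ (F₀ ⊔ F₁ : Submodule ℝ F) := by
      intro x hx
      rw [hT x]
      exact add_mem hx (Submodule.mem_sup_left (hle₀ (hNrange x)))
    have e0 := aux_det_restrict T N hT F₀ (F₀ ⊔ F₁) le_sup_left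
      (fun x => hle₀ (hNrange x)) h₀ h₂
    have e1 := aux_det_restrict T N hT F₁ (F₀ ⊔ F₁) le_sup_right
      (fun x => hle₁ (hNrange x)) h₁ h₂
    rw [e0, e1]
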